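/- Let d ≥ 1, let ν ∈ ℝ^d be a unit vector, and let ξ ∈ ℝ^d. Then ∫_{ℝ^d} ξ·(∇²G_1(z) ξ)·max(ν·z, 0) dz = c₀·(ξ·ν)², where c₀ = 1/√(2π) and ∇²G_1(z) = (z⊗z − Id)·G_1(z) is the Hessian matrix of the standard Gaussian density G_1(z) = (2π)^{−d/2} exp(−|z|²/2). -/

import Mathlib

open MeasureTheory

/-- The standard Gaussian density `G_1(z) = (2π)^{-d/2} exp(-|z|²/2)` on `ℝ^d`. -/
noncomputable def stdGauss (d : ℕ) (z : EuclideanSpace ℝ (Fin d)) : ℝ :=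
  (2 * Real.pi) ^ (-(d : ℝ) / 2) * Real.exp (-‖z‖ ^ 2 / 2)

/-- The Hessian `∇²G_1(z) = (z ⊗ z - Id) G_1(z)` of the standard Gaussian density. -/
noncomputable def stdGaussHessian (d : ℕ) (z : EuclideanSpace ℝ (Fin d)) :
    Matrix (Fin d) (Fin d) ℝ :=
  stdGauss d z • (Matrix.vecMulVec (fun i => z i) (fun i => z i) - 1)

open Real Filter


-- tendsto of x^n exp(-x^2/2) at top
lemma tendsto_pow_mul_gauss (n : ℕ) :
    Tendsto (fun x : ℝ => x ^ n * Real.exp (-x ^ 2 / 2)) atTop (nhds 0) := by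
  have h1 : Tendsto (fun x : ℝ => x ^ 2 / 2) atTop atTop := by
    apply Tendsto.atTop_div_const (by norm_num)
    exact tendsto_pow_atTop (by norm_num)
  have h2 : Tendsto (fun u : ℝ => 2 ^ n * (u ^ n * Real.exp (-u))) atTop (nhds 0) := by
    simpa using (Real.tendsto_pow_mul_exp_neg_atTop_nhds_zero n).const_mul ((2:ℝ) ^ n)
  have h3 : Tendsto (fun x : ℝ => 2 ^ n * ((x ^ 2 / 2) ^ n * Real.exp (-(x ^ 2 / 2))))
      atTop (nhds 0) := h2.comp h1
  have h0 : Tendsto (fun x : ℝ => 0 : ℝ → ℝ) atTop (nhds 0) := tendsto_const_nhds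
  refine squeeze_zero' ?_ ?_ h3
  · filter_upwards [eventually_ge_atTop (0:ℝ)] with x hx
    positivity
  · filter_upwards [eventually_ge_atTop (1:ℝ)] with x hx
    have hx0 : (0:ℝ) ≤ x := by linarith
    have : x ^ n ≤ x ^ (2 * n) := pow_le_pow_right₀ hx (by omega)
    calc x ^ n * Real.exp (-x ^ 2 / 2) ≤ x ^ (2*n) * Real.exp (-x^2/2) := by
          apply mul_le_mul_of_nonneg_right this (Real.exp_nonneg _)
      _ = 2 ^ n * ((x ^ 2 / 2) ^ n * Real.exp (-(x ^ 2 / 2))) := by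
          rw [div_pow, pow_mul, neg_div]
          field_simp

lemma hasDerivAt_gauss (t : ℝ) :
    HasDerivAt (fun s : ℝ => Real.exp (-s ^ 2 / 2)) (-t * Real.exp (-t ^ 2 / 2)) t := by
  have h : HasDerivAt (fun s : ℝ => -s ^ 2 / 2) (-t) t := by
    have := ((hasDerivAt_pow 2 t).neg).div_const 2
    simpa using this.congr_deriv (by push_cast; ring)
  simpa [mul_comm] using h.exp

lemma integrable_gauss : Integrable (fun t : ℝ => Real.exp (-t ^ 2 / 2)) := by
  have := integrable_exp_neg_mul_sq (b := (1:ℝ)/2) (by norm_num)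
  refine this.congr ?_
  filter_upwards with t
  ring_nf

lemma integrable_mul_gauss : Integrable (fun t : ℝ => t * Real.exp (-t ^ 2 / 2)) := by
  have := integrable_mul_exp_neg_mul_sq (b := (1:ℝ)/2) (by norm_num)
  refine this.congr ?_
  filter_upwards with t
  ring_nf

lemma integrable_pow_mul_gauss (n : ℕ) :
    Integrable (fun t : ℝ => t ^ n * Real.exp (-t ^ 2 / 2)) := by
  have h := integrable_rpow_mul_exp_neg_mul_sq (b := (1:ℝ)/2) (by norm_num)
    (s := (n:ℝ)) (by exact_mod_cast neg_one_lt_zero.trans_le n.cast_nonneg)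
  refine h.congr ?_
  filter_upwards with t
  rw [Real.rpow_natCast]
  ring_nf

lemma integral_gauss_line : ∫ t : ℝ, Real.exp (-t ^ 2 / 2) = Real.sqrt (2 * Real.pi) := by
  have := integral_gaussian ((1:ℝ)/2)
  rw [show Real.sqrt (Real.pi / (1/2)) = Real.sqrt (2 * Real.pi) by norm_num [mul_comm]] at this
  rw [← this]
  congr 1
  ext t
  ring_nf

lemma integral_Ioi_mul_gauss : ∫ t in Set.Ioi (0:ℝ), t * Real.exp (-t ^ 2 / 2) = 1 := by
  have h : ∫ t in Set.Ioi (0:ℝ), t * Real.exp (-t ^ 2 / 2)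
      = 0 - -Real.exp (-(0:ℝ) ^ 2 / 2) := by
    refine integral_Ioi_of_hasDerivAt_of_tendsto' (f := fun t => -Real.exp (-t ^ 2 / 2))
      (fun x _ => ?_) (integrable_mul_gauss.integrableOn) ?_
    · simpa [neg_mul] using (hasDerivAt_gauss x).fun_neg
    · have := (tendsto_pow_mul_gauss 0).neg
      simpa using this
  simpa using h

lemma integral_Ioi_cube_mul_gauss :
    ∫ t in Set.Ioi (0:ℝ), t ^ 3 * Real.exp (-t ^ 2 / 2) = 2 := by
  have h : ∫ t in Set.Ioi (0:ℝ), t ^ 3 * Real.exp (-t ^ 2 / 2)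
      = 0 - -((0:ℝ) ^ 2 + 2) * Real.exp (-(0:ℝ) ^ 2 / 2) := by
    refine integral_Ioi_of_hasDerivAt_of_tendsto'
      (f := fun t => -(t ^ 2 + 2) * Real.exp (-t ^ 2 / 2))
      (fun x _ => ?_) ((integrable_pow_mul_gauss 3).integrableOn) ?_
    · have h1 : HasDerivAt (fun t : ℝ => -(t ^ 2 + 2)) (-(2 * x)) x := by
        simpa using (((hasDerivAt_pow 2 x).add_const 2).fun_neg)
      have := h1.fun_mul (hasDerivAt_gauss x)
      refine this.congr_deriv ?_
      ring
    · have h2 := (tendsto_pow_mul_gauss 2).neg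
      have h0 := ((tendsto_pow_mul_gauss 0).const_mul (2:ℝ)).neg
      have := h2.add h0
      simp only [neg_zero, add_zero, mul_zero, neg_add] at this ⊢
      refine this.congr fun x => ?_
      simp only [pow_zero, one_mul]
      ring
  simpa using h

lemma integral_sq_mul_gauss :
    ∫ t : ℝ, t ^ 2 * Real.exp (-t ^ 2 / 2) = Real.sqrt (2 * Real.pi) := by
  have hu : ∀ x : ℝ, HasDerivAt (fun t : ℝ => t) 1 x := fun x => hasDerivAt_id x
  have hv : ∀ x : ℝ, HasDerivAt (fun t : ℝ => -Real.exp (-t ^ 2 / 2))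
      (x * Real.exp (-x ^ 2 / 2)) x := fun x => by
    simpa [neg_mul] using (hasDerivAt_gauss x).fun_neg
  have huv' : Integrable ((fun t : ℝ => t) * fun t : ℝ => t * Real.exp (-t ^ 2 / 2)) := by
    refine (integrable_pow_mul_gauss 2).congr ?_
    filter_upwards with t
    simp [Pi.mul_apply]; ring
  have hu'v : Integrable ((fun _ : ℝ => (1:ℝ)) * fun t : ℝ => -Real.exp (-t ^ 2 / 2)) := by
    refine integrable_gauss.neg.congr ?_
    filter_upwards with t
    simp [Pi.mul_apply]
  have htop : Tendsto ((fun t : ℝ => t) * fun t : ℝ => -Real.exp (-t ^ 2 / 2)) atTop (nhds 0) := by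
    have := (tendsto_pow_mul_gauss 1).neg
    simp only [pow_one, neg_zero] at this
    refine this.congr fun x => ?_
    simp [Pi.mul_apply]
  have hG : Tendsto (fun x : ℝ => x * Real.exp (-x ^ 2 / 2)) atTop (nhds 0) := by
    simpa using tendsto_pow_mul_gauss 1
  have hGn : Tendsto (fun x : ℝ => x * Real.exp (-x ^ 2 / 2)) atBot (nhds 0) := by
    have h2 := (hG.neg).comp tendsto_neg_atBot_atTop
    simp only [Function.comp_def, neg_zero] at h2
    refine h2.congr fun x => ?_
    simp [neg_sq]
  have hbot : Tendsto ((fun t : ℝ => t) * fun t : ℝ => -Real.exp (-t ^ 2 / 2)) atBot (nhds 0) := by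
    have := hGn.neg
    simp only [neg_zero] at this
    refine this.congr fun x => ?_
    simp [Pi.mul_apply]
  have := integral_mul_deriv_eq_deriv_mul (fun x _ => hu x) (fun x _ => hv x) huv' hu'v hbot htop
  rw [show ∫ x : ℝ, x * (x * Real.exp (-x ^ 2 / 2)) = ∫ t : ℝ, t ^ 2 * Real.exp (-t ^ 2 / 2)
      from by congr 1; ext x; ring] at this
  rw [this]
  rw [show ∫ x : ℝ, (1:ℝ) * -Real.exp (-x ^ 2 / 2) = -∫ t : ℝ, Real.exp (-t ^ 2 / 2) from by
    rw [← integral_neg]; congr 1; ext x; ring]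
  rw [integral_gauss_line]
  ring

noncomputable def phi1 (t : ℝ) : ℝ := (Real.sqrt (2 * Real.pi))⁻¹ * Real.exp (-t ^ 2 / 2)

lemma sqrt_two_pi_pos : 0 < Real.sqrt (2 * Real.pi) :=
  Real.sqrt_pos.2 (by positivity)

lemma phi1_cont : Continuous phi1 := by
  unfold phi1; continuity

lemma integrable_pow_mul_phi1 (n : ℕ) : Integrable (fun t : ℝ => t ^ n * phi1 t) := by
  unfold phi1
  have := ((integrable_pow_mul_gauss n).const_mul ((Real.sqrt (2 * Real.pi))⁻¹))
  refine this.congr ?_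
  filter_upwards with t
  ring

lemma integrable_pow_mul_max_mul_phi1 (n : ℕ) :
    Integrable (fun t : ℝ => t ^ n * (max t 0 * phi1 t)) := by
  refine ((integrable_pow_mul_phi1 (n+1)).abs).mono' ?_ ?_
  · exact (Continuous.mul (by continuity)
      ((continuous_id.max continuous_const).mul phi1_cont)).aestronglyMeasurable
  · filter_upwards with t
    have hp : 0 < phi1 t := by unfold phi1; positivity
    have hm : 0 ≤ max t 0 := le_max_right t 0
    rw [Real.norm_eq_abs, abs_mul, abs_mul, abs_mul, abs_pow, abs_pow,
      abs_of_nonneg hm, abs_of_pos hp, pow_succ]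
    have : max t 0 ≤ |t| := max_le (le_abs_self t) (abs_nonneg t)
    calc |t| ^ n * (max t 0 * phi1 t) ≤ |t| ^ n * (|t| * phi1 t) := by gcongr
      _ = |t| ^ n * |t| * phi1 t := by ring

lemma int_phi1 : ∫ t : ℝ, phi1 t = 1 := by
  unfold phi1
  rw [integral_const_mul, integral_gauss_line]
  field_simp

lemma int_id_phi1 : ∫ t : ℝ, t * phi1 t = 0 := by
  have h := integral_neg_eq_self (fun t : ℝ => t * phi1 t) volume
  have hodd : ∀ t : ℝ, (-t) * phi1 (-t) = -(t * phi1 t) := by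
    intro t; unfold phi1; rw [neg_sq]; ring
  rw [show (fun t : ℝ => (-t) * phi1 (-t)) = fun t : ℝ => -(t * phi1 t) from funext hodd] at h
  rw [integral_neg] at h
  linarith [h]

lemma int_sq_phi1 : ∫ t : ℝ, t ^ 2 * phi1 t = 1 := by
  unfold phi1
  rw [show (fun t : ℝ => t ^ 2 * ((Real.sqrt (2 * Real.pi))⁻¹ * Real.exp (-t ^ 2 / 2)))
    = fun t : ℝ => (Real.sqrt (2 * Real.pi))⁻¹ * (t ^ 2 * Real.exp (-t ^ 2 / 2)) from
    funext fun t => by ring]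
  rw [integral_const_mul, integral_sq_mul_gauss]
  field_simp

lemma int_max_gen (n : ℕ) : ∫ t : ℝ, t ^ n * (max t 0 * phi1 t)
    = (Real.sqrt (2 * Real.pi))⁻¹ * ∫ t in Set.Ioi (0:ℝ), t ^ (n+1) * Real.exp (-t ^ 2 / 2) := by
  rw [← intervalIntegral.integral_Iic_add_Ioi (b := (0:ℝ))
    (integrable_pow_mul_max_mul_phi1 n).integrableOn
    (integrable_pow_mul_max_mul_phi1 n).integrableOn]
  have h1 : ∫ t in Set.Iic (0:ℝ), t ^ n * (max t 0 * phi1 t) = 0 := by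
    rw [setIntegral_congr_fun measurableSet_Iic
      (g := fun _ => (0:ℝ)) ?_, integral_zero]
    intro t ht
    simp only
    rw [max_eq_right (Set.mem_Iic.1 ht)]
    ring
  have h2 : ∫ t in Set.Ioi (0:ℝ), t ^ n * (max t 0 * phi1 t)
      = ∫ t in Set.Ioi (0:ℝ), (Real.sqrt (2 * Real.pi))⁻¹ * (t ^ (n+1) * Real.exp (-t ^ 2 / 2)) := by
    refine setIntegral_congr_fun measurableSet_Ioi ?_
    intro t ht
    simp only
    rw [max_eq_left (le_of_lt (Set.mem_Ioi.1 ht))]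
    unfold phi1
    rw [pow_succ]
    ring
  rw [h1, h2, integral_const_mul, zero_add]

lemma int_max_phi1 : ∫ t : ℝ, max t 0 * phi1 t = (Real.sqrt (2 * Real.pi))⁻¹ := by
  have := int_max_gen 0
  simp only [pow_zero, one_mul, zero_add, pow_one] at this
  rw [this, integral_Ioi_mul_gauss, mul_one]

lemma int_sq_max_phi1 : ∫ t : ℝ, t ^ 2 * (max t 0 * phi1 t)
    = 2 * (Real.sqrt (2 * Real.pi))⁻¹ := by
  rw [int_max_gen 2]
  norm_num [integral_Ioi_cube_mul_gauss, mul_comm]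

section core
variable {d : ℕ} (i₀ : Fin d) (η : Fin d → ℝ)

/-- the per-coordinate factor -/
noncomputable def fac (i j k : Fin d) (t : ℝ) : ℝ :=
  (if k = i then t else 1) * (if k = j then t else 1) * (if k = i₀ then max t 0 else 1) * phi1 t

lemma fac_prod (i j : Fin d) (x : Fin d → ℝ) :
    ∏ k, fac i₀ i j k (x k)
      = x i * x j * max (x i₀) 0 * ∏ k, phi1 (x k) := by
  unfold fac
  rw [Finset.prod_mul_distrib, Finset.prod_mul_distrib, Finset.prod_mul_distrib]
  rw [Finset.prod_ite_eq' Finset.univ i (fun k => x k),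
    Finset.prod_ite_eq' Finset.univ j (fun k => x k),
    Finset.prod_ite_eq' Finset.univ i₀ (fun k => max (x k) 0)]
  simp

lemma fac_integrable (i j k : Fin d) : Integrable (fun t => fac i₀ i j k t) := by
  have hbound : Integrable (fun t : ℝ => (|t| + 1) ^ 3 * phi1 t) := by
    have h : ∀ m : ℕ, Integrable (fun t : ℝ => |t| ^ m * phi1 t) := by
      intro m
      have := (integrable_pow_mul_phi1 m).abs
      refine this.congr ?_
      filter_upwards with t
      have hp : 0 < phi1 t := by unfold phi1; positivity
      rw [abs_mul, abs_pow, abs_of_pos hp]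
    have hsum := (((h 0).add ((h 1).const_mul 3)).add ((h 2).const_mul 3)).add (h 3)
    refine hsum.congr ?_
    filter_upwards with t
    simp only [Pi.add_apply, pow_zero, pow_one, one_mul]
    ring
  refine hbound.mono' ?_ ?_
  · unfold fac
    apply Continuous.aestronglyMeasurable
    refine Continuous.mul (Continuous.mul (Continuous.mul ?_ ?_) ?_) phi1_cont <;>
      split <;> continuity
  · filter_upwards with t
    have hp : 0 < phi1 t := by unfold phi1; positivity
    have key : ∀ c : Prop, ∀ _ : Decidable c, ∀ s : ℝ, |s| ≤ |t| →
        |if c then s else 1| ≤ |t| + 1 := by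
      intro c hc s hs
      split
      · linarith
      · rw [abs_one]; have := abs_nonneg t; linarith
    unfold fac
    rw [Real.norm_eq_abs, abs_mul, abs_mul, abs_mul, abs_of_pos hp]
    calc |if k = i then t else 1| * |if k = j then t else 1| * |if k = i₀ then max t 0 else 1|
          * phi1 t
        ≤ (|t| + 1) * (|t| + 1) * (|t| + 1) * phi1 t := by
          gcongr
          · exact key _ _ t le_rfl
          · exact key _ _ t le_rfl
          · exact key _ _ (max t 0) (by
              rw [abs_of_nonneg (le_max_right t 0)]
              exact max_le (le_abs_self t) (abs_nonneg t))
      _ = (|t| + 1) ^ 3 * phi1 t := by ring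

-- value of the 1-D integral of fac
lemma fac_int_eq_zero_of (i j k : Fin d) (hki : k = i) (hkj : k ≠ j) (hk0 : k ≠ i₀) :
    ∫ t, fac i₀ i j k t = 0 := by
  unfold fac
  rw [show (fun t => (if k = i then t else 1) * (if k = j then t else 1) *
      (if k = i₀ then max t 0 else 1) * phi1 t) = fun t : ℝ => t * phi1 t from
    funext fun t => by rw [if_pos hki, if_neg hkj, if_neg hk0]; ring]
  exact int_id_phi1
end core

section core2
variable {d : ℕ} (i₀ : Fin d) (η : Fin d → ℝ)

lemma fac_int_zero' (i j k : Fin d) (hki : k ≠ i) (hkj : k = j) (hk0 : k ≠ i₀) :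
    ∫ t, fac i₀ i j k t = 0 := by
  unfold fac
  rw [show (fun t => (if k = i then t else 1) * (if k = j then t else 1) *
      (if k = i₀ then max t 0 else 1) * phi1 t) = fun t : ℝ => t * phi1 t from
    funext fun t => by rw [if_neg hki, if_pos hkj, if_neg hk0]; ring]
  exact int_id_phi1

lemma fac_int_one (i j k : Fin d) (hki : k ≠ i) (hkj : k ≠ j) (hk0 : k ≠ i₀) :
    ∫ t, fac i₀ i j k t = 1 := by
  unfold fac
  rw [show (fun t => (if k = i then t else 1) * (if k = j then t else 1) *
      (if k = i₀ then max t 0 else 1) * phi1 t) = fun t : ℝ => phi1 t from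
    funext fun t => by rw [if_neg hki, if_neg hkj, if_neg hk0]; ring]
  exact int_phi1

lemma fac_int_sq (i j k : Fin d) (hki : k = i) (hkj : k = j) (hk0 : k ≠ i₀) :
    ∫ t, fac i₀ i j k t = 1 := by
  unfold fac
  rw [show (fun t => (if k = i then t else 1) * (if k = j then t else 1) *
      (if k = i₀ then max t 0 else 1) * phi1 t) = fun t : ℝ => t ^ 2 * phi1 t from
    funext fun t => by rw [if_pos hki, if_pos hkj, if_neg hk0]; ring]
  exact int_sq_phi1

lemma fac_int_max (i j k : Fin d) (hki : k ≠ i) (hkj : k ≠ j) (hk0 : k = i₀) :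
    ∫ t, fac i₀ i j k t = (Real.sqrt (2 * Real.pi))⁻¹ := by
  unfold fac
  rw [show (fun t => (if k = i then t else 1) * (if k = j then t else 1) *
      (if k = i₀ then max t 0 else 1) * phi1 t) = fun t : ℝ => max t 0 * phi1 t from
    funext fun t => by rw [if_neg hki, if_neg hkj, if_pos hk0]; ring]
  exact int_max_phi1

lemma fac_int_sq_max (i j k : Fin d) (hki : k = i) (hkj : k = j) (hk0 : k = i₀) :
    ∫ t, fac i₀ i j k t = 2 * (Real.sqrt (2 * Real.pi))⁻¹ := by
  unfold fac
  rw [show (fun t => (if k = i then t else 1) * (if k = j then t else 1) *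
      (if k = i₀ then max t 0 else 1) * phi1 t) = fun t : ℝ => t ^ 2 * (max t 0 * phi1 t) from
    funext fun t => by rw [if_pos hki, if_pos hkj, if_pos hk0]; ring]
  exact int_sq_max_phi1

lemma P_offdiag (i j : Fin d) (hij : i ≠ j) :
    ∏ k, ∫ t, fac i₀ i j k t = 0 := by
  by_cases hi : i = i₀
  · refine Finset.prod_eq_zero (Finset.mem_univ j) ?_
    exact fac_int_zero' i₀ i j j (fun h => hij h.symm) rfl
      (fun h => hij (hi.trans h.symm))
  · refine Finset.prod_eq_zero (Finset.mem_univ i) ?_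
    exact fac_int_eq_zero_of i₀ i j i rfl hij hi

lemma P_diag (i : Fin d) :
    ∏ k, ∫ t, fac i₀ i i k t
      = if i = i₀ then 2 * (Real.sqrt (2 * Real.pi))⁻¹ else (Real.sqrt (2 * Real.pi))⁻¹ := by
  by_cases hi : i = i₀
  · rw [if_pos hi]
    rw [Finset.prod_eq_single i (fun k _ hk => fac_int_one i₀ i i k hk hk
      (by rw [← hi]; exact hk)) (by simp)]
    exact fac_int_sq_max i₀ i i i rfl rfl hi
  · rw [if_neg hi]
    have hmem : i ∈ Finset.univ (α := Fin d) := Finset.mem_univ i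
    rw [← Finset.mul_prod_erase _ _ hmem]
    have hmem2 : i₀ ∈ Finset.univ.erase i :=
      Finset.mem_erase.2 ⟨fun h => hi h.symm, Finset.mem_univ i₀⟩
    rw [← Finset.mul_prod_erase _ _ hmem2]
    rw [fac_int_sq i₀ i i i rfl rfl hi,
      fac_int_max i₀ i i i₀ (fun h => hi h.symm) (fun h => hi h.symm) rfl]
    rw [Finset.prod_eq_one ?_]
    · ring
    · intro k hk
      obtain ⟨hk0, hk1⟩ := Finset.mem_erase.1 hk
      obtain ⟨hki, _⟩ := Finset.mem_erase.1 hk1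
      exact fac_int_one i₀ i i k hki hki hk0

noncomputable def fac0 (k : Fin d) (t : ℝ) : ℝ :=
  (if k = i₀ then max t 0 else 1) * phi1 t

lemma fac0_prod (x : Fin d → ℝ) :
    ∏ k, fac0 i₀ k (x k) = max (x i₀) 0 * ∏ k, phi1 (x k) := by
  unfold fac0
  rw [Finset.prod_mul_distrib, Finset.prod_ite_eq' Finset.univ i₀ (fun k => max (x k) 0)]
  simp

lemma fac0_integrable (k : Fin d) : Integrable (fun t => fac0 i₀ k t) := by
  unfold fac0
  by_cases hk : k = i₀
  · simp only [if_pos hk]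
    simpa using integrable_pow_mul_max_mul_phi1 0
  · simp only [if_neg hk, one_mul]
    simpa using integrable_pow_mul_phi1 0

lemma fac0_prod_int : ∏ k, ∫ t, fac0 i₀ k t = (Real.sqrt (2 * Real.pi))⁻¹ := by
  rw [Finset.prod_eq_single i₀ ?_ (by simp)]
  · unfold fac0
    rw [show (fun t => (if i₀ = i₀ then max t 0 else 1) * phi1 t)
      = fun t : ℝ => max t 0 * phi1 t from funext fun t => by rw [if_pos rfl]]
    exact int_max_phi1
  · intro k _ hk
    unfold fac0
    rw [show (fun t => (if k = i₀ then max t 0 else 1) * phi1 t)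
      = fun t : ℝ => phi1 t from funext fun t => by rw [if_neg hk, one_mul]]
    exact int_phi1

lemma core_integral :
    ∫ x : Fin d → ℝ,
        ((∑ i, η i * x i) ^ 2 - ∑ i, η i ^ 2) * max (x i₀) 0 * ∏ k, phi1 (x k)
      = (Real.sqrt (2 * Real.pi))⁻¹ * η i₀ ^ 2 := by
  set c : ℝ := (Real.sqrt (2 * Real.pi))⁻¹ with hc
  have hpt : ∀ x : Fin d → ℝ,
      ((∑ i, η i * x i) ^ 2 - ∑ i, η i ^ 2) * max (x i₀) 0 * ∏ k, phi1 (x k)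
        = (∑ i, ∑ j, η i * η j * ∏ k, fac i₀ i j k (x k))
          - (∑ i, η i ^ 2) * ∏ k, fac0 i₀ k (x k) := by
    intro x
    rw [fac0_prod]
    have : (∑ i, ∑ j, η i * η j * ∏ k, fac i₀ i j k (x k))
        = ∑ i, ∑ j, η i * η j * (x i * x j * max (x i₀) 0 * ∏ k, phi1 (x k)) := by
      refine Finset.sum_congr rfl fun i _ => Finset.sum_congr rfl fun j _ => ?_
      rw [fac_prod]
    rw [this]
    have hsq : (∑ i, η i * x i) ^ 2 = ∑ i, ∑ j, (η i * x i) * (η j * x j) := by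
      rw [sq, Finset.sum_mul_sum]
    rw [sub_mul, sub_mul, hsq, Finset.sum_mul, Finset.sum_mul]
    rw [mul_assoc]
    congr 1
    refine Finset.sum_congr rfl fun i _ => ?_
    rw [Finset.sum_mul, Finset.sum_mul]
    refine Finset.sum_congr rfl fun j _ => ?_
    ring
  rw [integral_congr_ae (Filter.Eventually.of_forall hpt)]
  have hint1 : ∀ i j : Fin d,
      Integrable (fun x : Fin d → ℝ => η i * η j * ∏ k, fac i₀ i j k (x k)) := fun i j =>
    (Integrable.fintype_prod (f := fun k => fac i₀ i j k) (fac_integrable i₀ i j)).const_mul _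
  have hint2 : Integrable (fun x : Fin d → ℝ =>
      (∑ i, η i ^ 2) * ∏ k, fac0 i₀ k (x k)) :=
    (Integrable.fintype_prod (f := fun k => fac0 i₀ k) (fac0_integrable i₀)).const_mul _
  rw [integral_sub (by exact integrable_finset_sum _ fun i _ =>
      integrable_finset_sum _ fun j _ => hint1 i j) hint2]
  rw [integral_finset_sum _ fun i _ => integrable_finset_sum _ fun j _ => hint1 i j]
  rw [MeasureTheory.integral_const_mul]
  have hPP : ∀ i j : Fin d, ∫ x : Fin d → ℝ, ∏ k, fac i₀ i j k (x k)
      = ∏ k, ∫ t, fac i₀ i j k t := fun i j =>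
    integral_fintype_prod_eq_prod (fun k => fac i₀ i j k)
  have hP0 : ∫ x : Fin d → ℝ, ∏ k, fac0 i₀ k (x k) = c := by
    rw [show ∫ x : Fin d → ℝ, ∏ k, fac0 i₀ k (x k) = ∏ k, ∫ t, fac0 i₀ k t from
      integral_fintype_prod_eq_prod (fun k => fac0 i₀ k), fac0_prod_int]
  have hsum : ∑ i, ∫ x : Fin d → ℝ, ∑ j, η i * η j * ∏ k, fac i₀ i j k (x k)
      = ∑ i, η i ^ 2 * (if i = i₀ then 2 * c else c) := by
    refine Finset.sum_congr rfl fun i _ => ?_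
    rw [integral_finset_sum _ fun j _ => hint1 i j]
    have : ∀ j : Fin d, ∫ x : Fin d → ℝ, η i * η j * ∏ k, fac i₀ i j k (x k)
        = η i * η j * ∏ k, ∫ t, fac i₀ i j k t := by
      intro j; rw [MeasureTheory.integral_const_mul, hPP i j]
    rw [Finset.sum_congr rfl fun j _ => this j]
    rw [Finset.sum_eq_single i ?_ (by simp)]
    · rw [P_diag i₀ i]
      by_cases hi : i = i₀
      · rw [if_pos hi]; ring
      · rw [if_neg hi]; ring
    · intro j _ hji
      rw [P_offdiag i₀ i j (fun h => hji h.symm), mul_zero]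
  rw [hsum, hP0]
  have : ∑ i, η i ^ 2 * (if i = i₀ then 2 * c else c)
      = (∑ i, η i ^ 2 * c) + ∑ i, (if i = i₀ then η i ^ 2 * c else 0) := by
    rw [← Finset.sum_add_distrib]
    refine Finset.sum_congr rfl fun i _ => ?_
    by_cases hi : i = i₀
    · rw [if_pos hi, if_pos hi]; ring
    · rw [if_neg hi, if_neg hi]; ring

  rw [this, Finset.sum_ite_eq' Finset.univ i₀ (fun i => η i ^ 2 * c)]
  simp only [Finset.mem_univ, if_true]
  rw [← Finset.sum_mul]
  ring

end core2

lemma hess_quad (d : ℕ) (ξ z : EuclideanSpace ℝ (Fin d)) :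
    dotProduct (fun i => ξ i) ((stdGaussHessian d z).mulVec fun i => ξ i)
      = ((∑ i, ξ i * z i) ^ 2 - ∑ i, ξ i ^ 2) * stdGauss d z := by
  simp only [stdGaussHessian, dotProduct, Matrix.mulVec, Matrix.smul_apply,
    Matrix.sub_apply, Matrix.vecMulVec_apply, Matrix.one_apply, smul_eq_mul,
    dotProduct]
  rw [sub_mul, sq, Finset.sum_mul_sum, Finset.sum_mul, Finset.sum_mul, ← Finset.sum_sub_distrib]
  refine Finset.sum_congr rfl fun i _ => ?_
  have : ξ i ^ 2 * stdGauss d z = ∑ j, (if i = j then ξ i * ξ j * stdGauss d z else 0) := by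
    rw [Finset.sum_ite_eq Finset.univ i fun j => ξ i * ξ j * stdGauss d z]
    simp only [Finset.mem_univ, if_true, sq]
  rw [this, Finset.mul_sum, Finset.sum_mul, ← Finset.sum_sub_distrib]
  refine Finset.sum_congr rfl fun j _ => ?_
  by_cases hij : i = j
  · rw [if_pos hij, if_pos hij, hij]; ring
  · rw [if_neg hij, if_neg hij]; ring

lemma stdGauss_prod (d : ℕ) (w : EuclideanSpace ℝ (Fin d)) :
    stdGauss d w = ∏ k, phi1 (w k) := by
  unfold stdGauss phi1
  rw [Finset.prod_mul_distrib, Finset.prod_const, ← Real.exp_sum]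
  have h2π : (0:ℝ) ≤ 2 * Real.pi := by positivity
  rw [Finset.card_univ, Fintype.card_fin]
  have hn : ‖w‖ ^ 2 = ∑ i, (w i) ^ 2 := by
    rw [EuclideanSpace.norm_eq, Real.sq_sqrt (by positivity)]
    exact Finset.sum_congr rfl fun i _ => by rw [Real.norm_eq_abs, sq_abs]
  congr 1
  · rw [Real.sqrt_eq_rpow, ← Real.rpow_neg_one ((2 * Real.pi) ^ ((1:ℝ)/2)),
      ← Real.rpow_mul h2π, ← Real.rpow_natCast ((2 * Real.pi) ^ ((1:ℝ)/2 * (-1:ℝ))) d,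
      ← Real.rpow_mul h2π]
    congr 1
    push_cast
    ring
  · simp only [hn, neg_div, Finset.sum_div, Finset.sum_neg_distrib]

theorem stmt_19 (d : ℕ) (hd : 1 ≤ d) (ν : EuclideanSpace ℝ (Fin d)) (hν : ‖ν‖ = 1)
    (ξ : EuclideanSpace ℝ (Fin d)) :
    ∫ z : EuclideanSpace ℝ (Fin d),
        (dotProduct (fun i => ξ i) ((stdGaussHessian d z).mulVec fun i => ξ i)) *
          max (dotProduct (fun i => ν i) fun i => z i) 0
      = (1 / Real.sqrt (2 * Real.pi)) *
          (dotProduct (fun i => ξ i) fun i => ν i) ^ 2 := by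
  classical
  set i₀ : Fin d := ⟨0, hd⟩
  -- orthonormal basis with b i₀ = ν
  have horth : Orthonormal ℝ (Set.restrict {i₀} (fun _ : Fin d => ν)) := by
    constructor
    · intro i; exact hν
    · intro i j hij
      exact absurd (Subtype.ext ((i.2 : i.1 ∈ ({i₀} : Set (Fin d))).trans
        (j.2 : j.1 ∈ ({i₀} : Set (Fin d))).symm)) hij
  obtain ⟨b, hb⟩ := horth.exists_orthonormalBasis_extension_of_card_eq
    (by simp [finrank_euclideanSpace])
  have hbi₀ : b i₀ = ν := hb i₀ rfl
  set η : Fin d → ℝ := fun i => b.repr ξ i with hη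
  -- rewrite the integrand
  have hinner : ∀ x y : EuclideanSpace ℝ (Fin d), ∑ i, x i * y i = inner (𝕜 := ℝ) x y := by
    intro x y
    rw [PiLp.inner_apply]
    simp [RCLike.inner_apply, mul_comm]
  have hC : ∑ i, ξ i ^ 2 = ∑ i, η i ^ 2 := by
    have h1 : ∑ i, ξ i * ξ i = inner (𝕜 := ℝ) ξ ξ := hinner ξ ξ
    have h2 : inner (𝕜 := ℝ) ξ ξ = inner (𝕜 := ℝ) (b.repr ξ) (b.repr ξ) :=
      (b.repr.inner_map_map ξ ξ).symm
    have h3 : inner (𝕜 := ℝ) (b.repr ξ) (b.repr ξ) = ∑ i, η i * η i :=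
      (hinner (b.repr ξ) (b.repr ξ)).symm
    simp only [sq]
    rw [h1, h2, h3]
  -- change of variables
  have step1 : ∫ z : EuclideanSpace ℝ (Fin d),
        ((∑ i, ξ i * z i) ^ 2 - ∑ i, ξ i ^ 2) * max (∑ i, ν i * z i) 0 * stdGauss d z
      = ∫ y : EuclideanSpace ℝ (Fin d),
        ((∑ i, η i * y i) ^ 2 - ∑ i, η i ^ 2) * max (y i₀) 0 * stdGauss d y := by
    rw [← (b.measurePreserving_repr_symm).integral_comp'
      (f := b.measurableEquiv.symm)
      (g := fun z => ((∑ i, ξ i * z i) ^ 2 - ∑ i, ξ i ^ 2) * max (∑ i, ν i * z i) 0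
        * stdGauss d z)]
    refine integral_congr_ae (Filter.Eventually.of_forall fun y => ?_)
    have hco : (b.measurableEquiv.symm y : EuclideanSpace ℝ (Fin d)) = b.repr.symm y := rfl
    simp only [hco]
    have e1 : ∑ i, ξ i * (b.repr.symm y) i = ∑ i, η i * y i := by
      rw [hinner ξ (b.repr.symm y), ← b.repr.inner_map_map ξ (b.repr.symm y),
        b.repr.apply_symm_apply, ← hinner (b.repr ξ) y]
    have e2 : ∑ i, ν i * (b.repr.symm y) i = y i₀ := by
      rw [hinner ν (b.repr.symm y), ← hbi₀, ← b.repr_apply_apply (b.repr.symm y) i₀,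
        b.repr.apply_symm_apply]
    have e3 : stdGauss d (b.repr.symm y) = stdGauss d y := by
      unfold stdGauss
      rw [b.repr.symm.norm_map]
    rw [e1, e2, e3, hC]
  have step2 : ∫ y : EuclideanSpace ℝ (Fin d),
        ((∑ i, η i * y i) ^ 2 - ∑ i, η i ^ 2) * max (y i₀) 0 * stdGauss d y
      = ∫ x : Fin d → ℝ,
        ((∑ i, η i * x i) ^ 2 - ∑ i, η i ^ 2) * max (x i₀) 0 * ∏ k, phi1 (x k) := by
    rw [← ((EuclideanSpace.volume_preserving_symm_measurableEquiv_toLp (Fin d)).symm _).integral_comp'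
      (f := (MeasurableEquiv.toLp 2 (Fin d → ℝ)).symm.symm)
      (g := fun y : EuclideanSpace ℝ (Fin d) =>
        ((∑ i, η i * y i) ^ 2 - ∑ i, η i ^ 2) * max (y i₀) 0 * stdGauss d y)]
    refine integral_congr_ae (Filter.Eventually.of_forall fun x => ?_)
    have hcoord : ∀ i, ((MeasurableEquiv.toLp 2 (Fin d → ℝ)).symm.symm x) i = x i := fun i => rfl
    simp only [stdGauss_prod, hcoord]
  rw [show (fun z : EuclideanSpace ℝ (Fin d) =>
      (dotProduct (fun i => ξ i) ((stdGaussHessian d z).mulVec fun i => ξ i)) *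
        max (dotProduct (fun i => ν i) fun i => z i) 0)
    = fun z : EuclideanSpace ℝ (Fin d) =>
      ((∑ i, ξ i * z i) ^ 2 - ∑ i, ξ i ^ 2) * max (∑ i, ν i * z i) 0 * stdGauss d z from
    funext fun z => by
      rw [hess_quad]
      simp only [dotProduct]
      ring]
  rw [step1, step2, core_integral i₀ η]
  have hlast : η i₀ = dotProduct (fun i => ξ i) fun i => ν i := by
    simp only [dotProduct]
    show b.repr ξ i₀ = ∑ i, ξ i * ν i
    rw [b.repr_apply_apply ξ i₀, hbi₀, ← hinner ν ξ]
    exact Finset.sum_congr rfl fun i _ => mul_comm _ _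
  rw [hlast, one_div]
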